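/- Let n ≥ 5 and let α, β be semigroup endomorphisms of T_n. Then α and β are Green's L-related, i.e. there exist semigroup endomorphisms γ, δ of T_n with α = γ·β and β = δ·α, if and only if α = β or both α and β are bijective (as maps T_n → T_n). -/

import Mathlib

/-- `s : Fin n → Fin n` is an odd permutation if it is the underlying function of some
permutation of sign `-1`. -/
def IsOddPerm {n : ℕ} (s : Fin n → Fin n) : Prop :=
  ∃ σ : Equiv.Perm (Fin n), Equiv.Perm.sign σ = -1 ∧ ⇑σ = s

/-- `s : Fin n → Fin n` is an even permutation if it is the underlying function of some
permutation of sign `1`. -/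
def IsEvenPerm {n : ℕ} (s : Fin n → Fin n) : Prop :=
  ∃ σ : Equiv.Perm (Fin n), Equiv.Perm.sign σ = 1 ∧ ⇑σ = s

/-- A pair `(t, e)` of elements of `T_n` is permissible if `t ∘ t ∘ t = t` and
`t ∘ e = e ∘ t = e ∘ e = e`. -/
def Permissible {n : ℕ} (t e : Fin n → Fin n) : Prop :=
  t ∘ t ∘ t = t ∧ t ∘ e = e ∧ e ∘ t = e ∧ e ∘ e = e

open Classical in
/-- For a (permissible) pair `(t, e)`, the map `φ_{t,e} : T_n → T_n` sending `s` to `t` if `s`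
is an odd permutation, to `t ∘ t` if `s` is an even permutation, and to `e` if `s` is not
bijective. -/
noncomputable def phi {n : ℕ} (t e : Fin n → Fin n) : (Fin n → Fin n) → (Fin n → Fin n) :=
  fun s => if IsOddPerm s then t else if IsEvenPerm s then t ∘ t else e

/-- `φ : T_n → T_n` is a semigroup endomorphism of `T_n` if `φ (s ∘ s') = φ s ∘ φ s'`
for all `s, s'`. -/
def IsEndo {n : ℕ} (φ : (Fin n → Fin n) → (Fin n → Fin n)) : Prop :=
  ∀ s s' : Fin n → Fin n, φ (s ∘ s') = φ s ∘ φ s'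

/-! ### Auxiliary lemmas -/

open Function Equiv

variable {n : ℕ}

lemma odd_even_false {s : Fin n → Fin n} (h : IsOddPerm s) (h' : IsEvenPerm s) : False := by
  obtain ⟨σ, hσ, hσs⟩ := h
  obtain ⟨τ, hτ, hτs⟩ := h'
  have : σ = τ := Equiv.coe_fn_injective (hσs.trans hτs.symm)
  subst this
  rw [hσ] at hτ
  exact absurd hτ (by decide)

lemma IsOddPerm.bijective {s : Fin n → Fin n} (h : IsOddPerm s) : Function.Bijective s := by
  obtain ⟨σ, -, rfl⟩ := h; exact σ.bijective

lemma IsEvenPerm.bijective {s : Fin n → Fin n} (h : IsEvenPerm s) : Function.Bijective s := by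
  obtain ⟨σ, -, rfl⟩ := h; exact σ.bijective

lemma trichotomy (s : Fin n → Fin n) : IsOddPerm s ∨ IsEvenPerm s ∨ ¬ Function.Bijective s := by
  by_cases h : Function.Bijective s
  · rcases Int.units_eq_one_or (Equiv.Perm.sign (Equiv.ofBijective s h)) with h1 | h1
    · exact Or.inr (Or.inl ⟨Equiv.ofBijective s h, h1, rfl⟩)
    · exact Or.inl ⟨Equiv.ofBijective s h, h1, rfl⟩
  · exact Or.inr (Or.inr h)

lemma phi_odd (t e : Fin n → Fin n) {s} (h : IsOddPerm s) : phi t e s = t := by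
  unfold phi; rw [if_pos h]

lemma phi_even (t e : Fin n → Fin n) {s} (h : IsEvenPerm s) : phi t e s = t ∘ t := by
  unfold phi; rw [if_neg (fun ho => odd_even_false ho h), if_pos h]

lemma phi_nonbij (t e : Fin n → Fin n) {s} (h : ¬ Function.Bijective s) : phi t e s = e := by
  unfold phi
  rw [if_neg (fun ho => h ho.bijective), if_neg (fun he => h he.bijective)]

lemma phi_mem (t e : Fin n → Fin n) (s) : phi t e s = t ∨ phi t e s = t ∘ t ∨ phi t e s = e := by
  unfold phi; split_ifs <;> tauto

lemma exists_avoid (hn : 5 ≤ n) (S : Finset (Fin n)) (hS : S.card ≤ 4) : ∃ z, z ∉ S := by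
  by_contra h
  push_neg at h
  have h2 := Finset.card_le_card (fun x _ => h x : Finset.univ ⊆ S)
  rw [Finset.card_univ, Fintype.card_fin] at h2
  omega

/-- In a normal subgroup: commutator with a swap. -/
lemma swap_commutator_mem {K : Subgroup (Equiv.Perm (Fin n))} (hK : K.Normal)
    {κ : Equiv.Perm (Fin n)} (hκK : κ ∈ K) (x y : Fin n) :
    Equiv.swap x y * (κ * Equiv.swap x y * κ⁻¹) ∈ K := by
  have h1 : Equiv.swap x y * κ * (Equiv.swap x y)⁻¹ ∈ K := hK.conj_mem κ hκK _
  have h2 : Equiv.swap x y * (κ * Equiv.swap x y * κ⁻¹)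
      = (Equiv.swap x y * κ * (Equiv.swap x y)⁻¹) * κ⁻¹ := by
    rw [Equiv.swap_inv]; group
  rw [h2]
  exact K.mul_mem h1 (K.inv_mem hκK)

lemma swap_commutator_form (κ : Equiv.Perm (Fin n)) (x y : Fin n) :
    Equiv.swap x y * (κ * Equiv.swap x y * κ⁻¹) = Equiv.swap x y * Equiv.swap (κ x) (κ y) := by
  rw [← Equiv.swap_apply_apply κ x y]

/-- Any nontrivial normal subgroup of `S_n`, `n ≥ 5`, contains the alternating group. -/
lemma alternating_le_of_ne_bot (hn : 5 ≤ n) (K : Subgroup (Equiv.Perm (Fin n)))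
    (hK : K.Normal) (hbot : K ≠ ⊥) : alternatingGroup (Fin n) ≤ K := by
  -- pick a nontrivial element
  obtain ⟨⟨κ, hκK⟩, hκ1⟩ := Subgroup.ne_bot_iff_exists_ne_one.mp hbot
  have hκ1' : κ ≠ 1 := by simpa [Subtype.ext_iff] using hκ1
  have hamove : ∃ a, κ a ≠ a := by
    by_contra h
    push_neg at h
    exact hκ1' (Equiv.ext (by simpa using h))
  obtain ⟨a, ha⟩ := hamove
  -- choose c ∉ {a, κ a}
  obtain ⟨c, hc⟩ := exists_avoid hn {a, κ a} (le_trans (Finset.card_insert_le _ _) (by simp))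
  simp only [Finset.mem_insert, Finset.mem_singleton, not_or] at hc
  obtain ⟨hca, hcb⟩ := hc
  set π : Equiv.Perm (Fin n) := Equiv.swap a c * Equiv.swap (κ a) (κ c) with hπ
  have hπK : π ∈ K := by
    rw [hπ, ← swap_commutator_form]
    exact swap_commutator_mem hK hκK a c
  have hπ1 : π ≠ 1 := by
    intro h
    have h2 : (Equiv.swap a c)⁻¹ = Equiv.swap (κ a) (κ c) := inv_eq_of_mul_eq_one_right h
    rw [Equiv.swap_inv] at h2
    have h3 := congrArg (fun p => p (κ a)) h2
    simp only [Equiv.swap_apply_left] at h3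
    rw [Equiv.swap_apply_of_ne_of_ne (Ne.symm (fun hh => ha hh.symm)) (Ne.symm hcb)] at h3
    exact hca (κ.injective h3.symm)
  -- π fixes everything outside S
  have hπfix : ∀ z, z ∉ ({a, c, κ a, κ c} : Finset (Fin n)) → π z = z := by
    intro z hz
    simp only [Finset.mem_insert, Finset.mem_singleton, not_or] at hz
    obtain ⟨h1, h2, h3, h4⟩ := hz
    rw [hπ]
    simp only [Equiv.Perm.mul_apply]
    rw [Equiv.swap_apply_of_ne_of_ne h3 h4, Equiv.swap_apply_of_ne_of_ne h1 h2]
  -- now find a point x moved by π, its image y, and a fixed point z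
  have hxmove : ∃ x, π x ≠ x := by
    by_contra h
    push_neg at h
    exact hπ1 (Equiv.ext h)
  obtain ⟨x, hx⟩ := hxmove
  obtain ⟨z, hz⟩ := exists_avoid hn {a, c, κ a, κ c} (by
    have h1 := Finset.card_insert_le a {c, κ a, κ c}
    have h2 := Finset.card_insert_le c {κ a, κ c}
    have h3 := Finset.card_insert_le (κ a) ({κ c} : Finset (Fin n))
    have h4 : ({κ c} : Finset (Fin n)).card = 1 := Finset.card_singleton _
    omega)
  have hπz : π z = z := hπfix z hz
  have hzx : z ≠ x := by
    intro h; subst h; exact hx hπz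
  have hzy : z ≠ π x := by
    intro h
    exact hzx (π.injective (hπz.trans h))
  have hxy : x ≠ π x := fun h => hx h.symm
  -- second commutator is a three-cycle
  set θ : Equiv.Perm (Fin n) := Equiv.swap x z * Equiv.swap (π x) (π z) with hθ
  have hθK : θ ∈ K := by
    rw [hθ, ← swap_commutator_form]
    exact swap_commutator_mem hK hπK x z
  have hθ3 : θ.IsThreeCycle := by
    rw [hθ, hπz, Equiv.swap_comm x z, Equiv.swap_comm (π x) z]
    exact Equiv.Perm.isThreeCycle_swap_mul_swap_same hzx hzy hxy
  -- conclude via closure of three-cycles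
  rw [← Equiv.Perm.closure_three_cycles_eq_alternating]
  rw [Subgroup.closure_le]
  intro τ hτ
  have hconj : IsConj θ τ := Equiv.Perm.isConj_iff_cycleType_eq.mpr
    (hθ3.cycleType.trans hτ.cycleType.symm)
  obtain ⟨g, hg⟩ := isConj_iff.mp hconj
  exact hg ▸ hK.conj_mem θ hθK g

lemma endo_const_collapse (φ : (Fin n → Fin n) → (Fin n → Fin n)) (hφ : IsEndo φ)
    (hni : ¬ Function.Injective φ) :
    ∀ u v : Fin n, φ (fun _ => u) = φ (fun _ => v) := by
  intro u v
  obtain ⟨a, b, hab, hne⟩ : ∃ a b : Fin n → Fin n, φ a = φ b ∧ a ≠ b := by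
    rw [Function.Injective] at hni; push_neg at hni
    obtain ⟨a, b, h1, h2⟩ := hni; exact ⟨a, b, h1, h2⟩
  obtain ⟨p, hp⟩ := Function.ne_iff.mp hne
  have key : φ (fun _ => a p) = φ (fun _ => b p) := by
    have h1 : (fun _ : Fin n => a p) = a ∘ (fun _ : Fin n => p) := rfl
    have h2 : (fun _ : Fin n => b p) = b ∘ (fun _ : Fin n => p) := rfl
    rw [h1, h2, hφ, hφ, hab]
  set g : Fin n → Fin n := fun x => if x = a p then u else v with hg
  have hgu : g ∘ (fun _ : Fin n => a p) = (fun _ => u) := by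
    funext x; simp [hg]
  have hgv : g ∘ (fun _ : Fin n => b p) = (fun _ => v) := by
    funext x; simp only [Function.comp_apply, hg]
    rw [if_neg (Ne.symm hp)]
  calc φ (fun _ => u) = φ g ∘ φ (fun _ => a p) := by rw [← hφ, hgu]
    _ = φ g ∘ φ (fun _ => b p) := by rw [key]
    _ = φ (fun _ => v) := by rw [← hφ, hgv]

lemma endo_perm_collapse (hn : 5 ≤ n) (φ : (Fin n → Fin n) → (Fin n → Fin n))
    (hφ : IsEndo φ) (hni : ¬ Function.Injective φ) :
    ¬ Function.Injective (fun σ : Equiv.Perm (Fin n) => φ ⇑σ) := by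
  intro hinj
  set ε := φ id with hε
  have hεε : ε ∘ ε = ε := by rw [hε, ← hφ]; rfl
  have h1 : ∀ σ : Equiv.Perm (Fin n), φ ⇑σ ∘ φ ⇑σ⁻¹ = ε := by
    intro σ
    have hcoe : (⇑σ : Fin n → Fin n) ∘ ⇑σ⁻¹ = id := by funext w; simp
    rw [hε, ← hφ, hcoe]
  have h2 : ∀ σ : Equiv.Perm (Fin n), φ ⇑σ⁻¹ ∘ φ ⇑σ = ε := by
    intro σ
    have hcoe : (⇑σ⁻¹ : Fin n → Fin n) ∘ ⇑σ = id := by funext w; simp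
    rw [hε, ← hφ, hcoe]
  have h3 : ∀ σ : Equiv.Perm (Fin n), ε ∘ φ ⇑σ = φ ⇑σ := by
    intro σ; rw [hε, ← hφ]; rfl
  have h4 : ∀ σ : Equiv.Perm (Fin n), φ ⇑σ ∘ ε = φ ⇑σ := by
    intro σ; rw [hε, ← hφ]; rfl
  set R : Finset (Fin n) := Finset.image ε Finset.univ with hR
  have hfix : ∀ x ∈ R, ε x = x := by
    intro x hx
    rw [hR, Finset.mem_image] at hx
    obtain ⟨y, -, rfl⟩ := hx
    exact congrFun hεε y
  have hmem : ∀ (g : Fin n → Fin n), ε ∘ g = g → ∀ x, g x ∈ R := by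
    intro g hg x
    rw [hR, Finset.mem_image]
    exact ⟨g x, Finset.mem_univ _, congrFun hg x⟩
  set Emb : Equiv.Perm (Fin n) → ({x // x ∈ R} ≃ {x // x ∈ R}) := fun σ =>
    { toFun := fun x => ⟨φ ⇑σ x.1, hmem _ (h3 σ) x.1⟩
      invFun := fun x => ⟨φ ⇑σ⁻¹ x.1, hmem _ (h3 σ⁻¹) x.1⟩
      left_inv := by
        intro x
        apply Subtype.ext
        show φ ⇑σ⁻¹ (φ ⇑σ x.1) = x.1
        have h5 := congrFun (h2 σ) x.1
        simp only [Function.comp_apply] at h5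
        rw [h5]
        exact hfix _ x.2
      right_inv := by
        intro x
        apply Subtype.ext
        show φ ⇑σ (φ ⇑σ⁻¹ x.1) = x.1
        have h5 := congrFun (h1 σ) x.1
        simp only [Function.comp_apply] at h5
        rw [h5]
        exact hfix _ x.2 } with hEmb
  have hEmbinj : Function.Injective Emb := by
    intro σ τ h
    apply hinj
    show φ ⇑σ = φ ⇑τ
    funext w
    have hw : ε w ∈ R := hmem ε hεε w
    have h5 := congrArg (fun (F : {x // x ∈ R} ≃ {x // x ∈ R}) => (F ⟨ε w, hw⟩).1) h
    simp only [hEmb, Equiv.coe_fn_mk] at h5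
    calc φ ⇑σ w = φ ⇑σ (ε w) := (congrFun (h4 σ) w).symm
      _ = φ ⇑τ (ε w) := h5
      _ = φ ⇑τ w := congrFun (h4 τ) w
  have hcard : Fintype.card (Equiv.Perm (Fin n)) ≤ Fintype.card ({x // x ∈ R} ≃ {x // x ∈ R}) :=
    Fintype.card_le_of_injective Emb hEmbinj
  rw [Fintype.card_perm, Fintype.card_fin, Fintype.card_equiv (Equiv.refl _),
    Fintype.card_coe] at hcard
  have hRle : R.card ≤ n := by
    rw [hR]
    exact le_trans Finset.card_image_le (by simp)
  have h0R : 0 < R.card := Finset.card_pos.mpr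
    ⟨ε ⟨0, by omega⟩, by rw [hR]; exact Finset.mem_image_of_mem _ (Finset.mem_univ _)⟩
  have hReq : R.card = n := by
    by_contra h
    have hlt : R.card < n := lt_of_le_of_ne hRle h
    have := (Nat.factorial_lt h0R).mpr hlt
    omega
  have hεid : ε = id := by
    have hRuniv : R = Finset.univ :=
      Finset.eq_univ_of_card R (by rw [hReq, Fintype.card_fin])
    funext y
    exact hfix y (hRuniv ▸ Finset.mem_univ y)
  -- now use the collapse of constants
  have hcc := endo_const_collapse φ hφ hni
  set z0 : Fin n := ⟨0, by omega⟩ with hz0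
  set e := φ (fun _ => z0) with he
  have hfixp : ∀ σ : Equiv.Perm (Fin n), φ ⇑σ ∘ e = e := by
    intro σ
    have h5 : (⇑σ : Fin n → Fin n) ∘ (fun _ : Fin n => z0) = (fun _ : Fin n => σ z0) := rfl
    calc φ ⇑σ ∘ e = φ (⇑σ ∘ (fun _ : Fin n => z0)) := by rw [he, ← hφ]
      _ = φ (fun _ : Fin n => σ z0) := by rw [h5]
      _ = e := by rw [he]; exact hcc _ _
  set p := e z0 with hp
  have hfixp' : ∀ σ : Equiv.Perm (Fin n), φ ⇑σ p = p := fun σ => congrFun (hfixp σ) z0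
  have hbij : ∀ σ : Equiv.Perm (Fin n), Function.Bijective (φ ⇑σ) := by
    intro σ
    apply Function.bijective_iff_has_inverse.mpr
    refine ⟨φ ⇑σ⁻¹, ?_, ?_⟩
    · intro w
      have h5 := congrFun (h2 σ) w
      rw [hεid] at h5
      exact h5
    · intro w
      have h5 := congrFun (h1 σ) w
      rw [hεid] at h5
      exact h5
  have hiff : ∀ (σ : Equiv.Perm (Fin n)) (x : Fin n), x ≠ p ↔ φ ⇑σ x ≠ p := by
    intro σ x
    constructor
    · intro hx h
      exact hx ((hbij σ).1 (h.trans (hfixp' σ).symm))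
    · intro hx h
      subst h
      exact hx (hfixp' σ)
  set Ψ : Equiv.Perm (Fin n) → Equiv.Perm {x : Fin n // x ≠ p} := fun σ =>
    Equiv.Perm.subtypePerm (Equiv.ofBijective (φ ⇑σ) (hbij σ)) (fun x => (hiff σ x).symm) with hΨ
  have hΨinj : Function.Injective Ψ := by
    intro σ τ h
    apply hinj
    show φ ⇑σ = φ ⇑τ
    funext w
    by_cases hw : w = p
    · subst hw; rw [hfixp' σ, hfixp' τ]
    · have h5 := congrArg (fun (F : Equiv.Perm {x : Fin n // x ≠ p}) => (F ⟨w, hw⟩).1) h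
      exact h5
  have hcard2 : Fintype.card (Equiv.Perm (Fin n)) ≤
      Fintype.card (Equiv.Perm {x : Fin n // x ≠ p}) :=
    Fintype.card_le_of_injective Ψ hΨinj
  have hsub : Fintype.card {x : Fin n // x ≠ p} = n - 1 := by
    rw [Fintype.card_subtype_compl, Fintype.card_subtype_eq, Fintype.card_fin]
  rw [Fintype.card_perm, Fintype.card_perm, Fintype.card_fin, hsub] at hcard2
  have : Nat.factorial (n - 1) < Nat.factorial n := (Nat.factorial_lt (by omega)).mpr (by omega)
  omega

lemma endo_even_collapse (hn : 5 ≤ n) (φ : (Fin n → Fin n) → (Fin n → Fin n))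
    (hφ : IsEndo φ) (hni : ¬ Function.Injective φ) :
    ∀ π : Equiv.Perm (Fin n), Equiv.Perm.sign π = 1 → φ ⇑π = φ id := by
  have hpc := endo_perm_collapse hn φ hφ hni
  rw [Function.Injective] at hpc; push_neg at hpc
  obtain ⟨σ, σ', hsame, hne⟩ := hpc
  -- hsame : φ ⇑σ = φ ⇑σ' (after beta)
  set K : Subgroup (Equiv.Perm (Fin n)) :=
    { carrier := {x | φ ⇑x = φ id}
      mul_mem' := by
        intro x y hx hy
        show φ ⇑(x * y) = φ id
        have hc : (⇑(x * y) : Fin n → Fin n) = ⇑x ∘ ⇑y := rfl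
        have hc2 : (id : Fin n → Fin n) ∘ id = id := rfl
        rw [hc, hφ, hx, hy, ← hφ, hc2]
      one_mem' := by show φ ⇑(1 : Equiv.Perm (Fin n)) = φ id; rfl
      inv_mem' := by
        intro x hx
        show φ ⇑x⁻¹ = φ id
        have hx' : φ ⇑x = φ id := hx
        have hco : (⇑x⁻¹ : Fin n → Fin n) ∘ ⇑x = id := by funext w; simp
        have hco' : (⇑x : Fin n → Fin n) ∘ ⇑x⁻¹ = id := by funext w; simp
        have e1 : φ ⇑x⁻¹ ∘ φ id = φ id := by
          calc φ ⇑x⁻¹ ∘ φ id = φ ⇑x⁻¹ ∘ φ ⇑x := by rw [hx']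
            _ = φ (⇑x⁻¹ ∘ ⇑x) := (hφ _ _).symm
            _ = φ id := by rw [hco]
        have e2 : φ id ∘ φ ⇑x⁻¹ = φ id := by
          calc φ id ∘ φ ⇑x⁻¹ = φ ⇑x ∘ φ ⇑x⁻¹ := by rw [hx']
            _ = φ (⇑x ∘ ⇑x⁻¹) := (hφ _ _).symm
            _ = φ id := by rw [hco']
        have e3 : φ ⇑x⁻¹ = φ ⇑x⁻¹ ∘ (φ id ∘ φ ⇑x⁻¹) := by
          conv_lhs => rw [show (⇑x⁻¹ : Fin n → Fin n) = ⇑x⁻¹ ∘ (⇑x ∘ ⇑x⁻¹) by rw [hco']; rfl]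
          rw [hφ, hφ, hx']
        rw [e2] at e3
        rw [e3, e1] } with hK
  have hKnormal : K.Normal := by
    constructor
    intro x hx g
    have hx' : φ ⇑x = φ id := hx
    show φ ⇑(g * x * g⁻¹) = φ id
    have hc : (⇑(g * x * g⁻¹) : Fin n → Fin n) = ⇑g ∘ (⇑x ∘ ⇑g⁻¹) := rfl
    have hcog : (⇑g : Fin n → Fin n) ∘ ⇑g⁻¹ = id := by funext w; simp
    have h6 : φ id ∘ φ ⇑g⁻¹ = φ (⇑g⁻¹ : Fin n → Fin n) := by
      have : (id : Fin n → Fin n) ∘ ⇑g⁻¹ = ⇑g⁻¹ := rfl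
      rw [← hφ, this]
    rw [hc, hφ, hφ, hx', h6, ← hφ, hcog]
  have hKbot : K ≠ ⊥ := by
    intro hbot
    have hmem : σ * σ'⁻¹ ∈ K := by
      show φ ⇑(σ * σ'⁻¹) = φ id
      have hc : (⇑(σ * σ'⁻¹) : Fin n → Fin n) = ⇑σ ∘ ⇑σ'⁻¹ := rfl
      have hco' : (⇑σ' : Fin n → Fin n) ∘ ⇑σ'⁻¹ = id := by funext w; simp
      rw [hc, hφ, hsame, ← hφ, hco']
    rw [hbot, Subgroup.mem_bot, mul_inv_eq_one] at hmem
    exact hne hmem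
  intro π hsign
  have hπK : π ∈ K :=
    alternating_le_of_ne_bot hn K hKnormal hKbot (Equiv.Perm.mem_alternatingGroup.mpr hsign)
  exact hπK

lemma endo_odd_collapse (hn : 5 ≤ n) (φ : (Fin n → Fin n) → (Fin n → Fin n))
    (hφ : IsEndo φ) (hni : ¬ Function.Injective φ) :
    ∀ σ τ : Equiv.Perm (Fin n), Equiv.Perm.sign σ = -1 → Equiv.Perm.sign τ = -1 →
      φ ⇑σ = φ ⇑τ := by
  intro σ τ hσ hτ
  have h1 : Equiv.Perm.sign (σ⁻¹ * τ) = 1 := by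
    rw [map_mul, map_inv, hσ, hτ]
    decide
  have h2 := endo_even_collapse hn φ hφ hni (σ⁻¹ * τ) h1
  have h3 : (⇑τ : Fin n → Fin n) = ⇑σ ∘ ⇑(σ⁻¹ * τ) := by funext w; simp
  have h4 : (⇑σ : Fin n → Fin n) ∘ id = ⇑σ := rfl
  rw [h3, hφ, h2, ← hφ, h4]

lemma endo_nonbij_collapse (hn : 5 ≤ n) (φ : (Fin n → Fin n) → (Fin n → Fin n))
    (hφ : IsEndo φ) (hni : ¬ Function.Injective φ) :
    ∀ s : Fin n → Fin n, ¬ Function.Bijective s →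
      φ s = φ (fun _ => (⟨0, by omega⟩ : Fin n)) := by
  have hcc := endo_const_collapse φ hφ hni
  have heven := endo_even_collapse hn φ hφ hni
  suffices h : ∀ k (s : Fin n → Fin n), ¬ Function.Bijective s →
      (Finset.image s Finset.univ).card ≤ k → φ s = φ (fun _ => (⟨0, by omega⟩ : Fin n)) by
    intro s hs
    exact h n s hs (le_trans Finset.card_image_le (by simp))
  intro k
  induction k with
  | zero =>
    intro s hs h0
    exfalso
    have hm : s ⟨0, by omega⟩ ∈ Finset.image s Finset.univ :=
      Finset.mem_image_of_mem _ (Finset.mem_univ _)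
    have := Finset.card_pos.mpr ⟨_, hm⟩
    omega
  | succ k ih =>
    intro s hs hk
    by_cases hconst : ∀ x, s x = s ⟨0, by omega⟩
    · have h1 : s = (fun _ => s ⟨0, by omega⟩) := funext hconst
      rw [h1]
      exact hcc _ _
    · push_neg at hconst
      obtain ⟨x, hx⟩ := hconst
      set z0 : Fin n := ⟨0, by omega⟩ with hz0
      set a := s z0 with hadef
      set b := s x with hbdef
      have hab : b ≠ a := hx
      have hnsurj : ¬ Function.Surjective s := fun h =>
        hs (Finite.surjective_iff_bijective.mp h)
      rw [Function.Surjective] at hnsurj; push_neg at hnsurj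
      obtain ⟨z, hz⟩ := hnsurj
      have hzim : z ∉ Finset.image s Finset.univ := by
        intro h
        rw [Finset.mem_image] at h
        obtain ⟨w, -, hw⟩ := h
        exact hz w hw
      have haim : a ∈ Finset.image s Finset.univ :=
        Finset.mem_image_of_mem _ (Finset.mem_univ _)
      have hbim : b ∈ Finset.image s Finset.univ :=
        Finset.mem_image_of_mem _ (Finset.mem_univ _)
      have hza : a ≠ z := fun h => hzim (h ▸ haim)
      have hzb : b ≠ z := fun h => hzim (h ▸ hbim)
      set π : Equiv.Perm (Fin n) := Equiv.swap a b * Equiv.swap a z with hπ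
      have hπsign : Equiv.Perm.sign π = 1 := by
        rw [hπ, map_mul, Equiv.Perm.sign_swap (Ne.symm hab), Equiv.Perm.sign_swap hza]
        decide
      set f : Fin n → Fin n := fun w => if w ∈ Finset.image s Finset.univ then w else a with hf
      set s' : Fin n → Fin n := fun w => if s w = b then a else s w with hs'def
      have hfact : f ∘ (⇑π ∘ s) = s' := by
        funext w
        simp only [Function.comp_apply, hs'def, hπ, Equiv.Perm.mul_apply]
        by_cases h1 : s w = b
        · rw [h1, if_pos rfl]
          rw [Equiv.swap_apply_of_ne_of_ne hab hzb, Equiv.swap_apply_right, hf]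
          simp only
          rw [if_pos haim]
        · rw [if_neg h1]
          by_cases h2 : s w = a
          · rw [h2, Equiv.swap_apply_left,
              Equiv.swap_apply_of_ne_of_ne (Ne.symm hza) (Ne.symm hzb), hf]
            simp only
            rw [if_neg hzim, ← h2]
          · have h3 : s w ≠ z := fun h => hz w h
            rw [Equiv.swap_apply_of_ne_of_ne h2 h3, Equiv.swap_apply_of_ne_of_ne h2 h1, hf]
            simp only
            rw [if_pos (Finset.mem_image_of_mem _ (Finset.mem_univ w))]
      have hφs' : φ s' = φ s := by
        have hid : (id : Fin n → Fin n) ∘ s = s := rfl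
        have hfs : f ∘ s = s := by
          funext w
          simp only [Function.comp_apply, hf]
          rw [if_pos (Finset.mem_image_of_mem _ (Finset.mem_univ w))]
        calc φ s' = φ (f ∘ (⇑π ∘ s)) := by rw [hfact]
          _ = φ f ∘ (φ ⇑π ∘ φ s) := by rw [hφ, hφ]
          _ = φ f ∘ (φ id ∘ φ s) := by rw [heven π hπsign]
          _ = φ f ∘ φ (id ∘ s) := by rw [hφ]
          _ = φ (f ∘ s) := by rw [hid, ← hφ]
          _ = φ s := by rw [hfs]
      have hs'nb : ¬ Function.Bijective s' := by
        intro h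
        obtain ⟨w, hw⟩ := h.2 b
        rw [hs'def] at hw
        simp only at hw
        by_cases h1 : s w = b
        · rw [if_pos h1] at hw; exact hab hw.symm
        · rw [if_neg h1] at hw; exact h1 hw
      have hs'card : (Finset.image s' Finset.univ).card ≤ k := by
        have hsubs : Finset.image s' Finset.univ ⊆ (Finset.image s Finset.univ).erase b := by
          intro y hy
          rw [Finset.mem_image] at hy
          obtain ⟨w, -, hw⟩ := hy
          rw [Finset.mem_erase]
          rw [hs'def] at hw
          simp only at hw
          by_cases h1 : s w = b
          · rw [if_pos h1] at hw
            exact ⟨hw ▸ (Ne.symm hab), hw ▸ haim⟩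
          · rw [if_neg h1] at hw
            exact ⟨hw ▸ h1, hw ▸ Finset.mem_image_of_mem _ (Finset.mem_univ w)⟩
        have h5 := Finset.card_le_card hsubs
        rw [Finset.card_erase_of_mem hbim] at h5
        omega
      rw [← hφs']
      exact ih s' hs'nb hs'card

theorem endo_classify (hn : 5 ≤ n) (φ : (Fin n → Fin n) → (Fin n → Fin n))
    (hφ : IsEndo φ) (hni : ¬ Function.Injective φ) :
    ∃ t e, Permissible t e ∧ φ = phi t e := by
  have h01 : (⟨0, by omega⟩ : Fin n) ≠ (⟨1, by omega⟩ : Fin n) := by simp [Fin.ext_iff]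
  set z0 : Fin n := ⟨0, by omega⟩ with hz0
  set z1 : Fin n := ⟨1, by omega⟩ with hz1
  set sw : Fin n → Fin n := ⇑(Equiv.swap z0 z1) with hsw
  set t := φ sw with ht
  set e := φ (fun _ => z0) with he
  have hcc := endo_const_collapse φ hφ hni
  have hodd := endo_odd_collapse hn φ hφ hni
  have heven := endo_even_collapse hn φ hφ hni
  have hnb := endo_nonbij_collapse hn φ hφ hni
  have hswsw : sw ∘ sw = id := by
    funext w; simp [hsw]
  have htt : t ∘ t = φ id := by
    rw [ht, ← hφ, hswsw]
  have hswid : sw ∘ id = sw := rfl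
  have hperm : Permissible t e := by
    refine ⟨?_, ?_, ?_, ?_⟩
    · show t ∘ t ∘ t = t
      calc t ∘ t ∘ t = t ∘ (t ∘ t) := rfl
        _ = φ sw ∘ φ id := by rw [htt, ht]
        _ = φ (sw ∘ id) := (hφ _ _).symm
        _ = t := by rw [hswid, ht]
    · show t ∘ e = e
      have hcomp : sw ∘ (fun _ : Fin n => z0) = (fun _ : Fin n => sw z0) := rfl
      calc t ∘ e = φ (sw ∘ (fun _ : Fin n => z0)) := by rw [ht, he, ← hφ]
        _ = φ (fun _ : Fin n => sw z0) := by rw [hcomp]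
        _ = e := by rw [he]; exact hcc _ _
    · show e ∘ t = e
      have hcomp : (fun _ : Fin n => z0) ∘ sw = (fun _ : Fin n => z0) := rfl
      calc e ∘ t = φ ((fun _ : Fin n => z0) ∘ sw) := by rw [ht, he, ← hφ]
        _ = e := by rw [hcomp, he]
    · show e ∘ e = e
      have hcomp : (fun _ : Fin n => z0) ∘ (fun _ : Fin n => z0) = (fun _ : Fin n => z0) := rfl
      calc e ∘ e = φ ((fun _ : Fin n => z0) ∘ (fun _ : Fin n => z0)) := by rw [he, ← hφ]
        _ = e := by rw [hcomp, he]
  refine ⟨t, e, hperm, ?_⟩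
  funext s
  rcases trichotomy s with hcase | hcase | hcase
  · rw [phi_odd t e hcase]
    obtain ⟨σ, hσ, rfl⟩ := hcase
    rw [ht, hsw]
    exact hodd σ (Equiv.swap z0 z1) hσ (Equiv.Perm.sign_swap h01)
  · rw [phi_even t e hcase, htt]
    obtain ⟨σ, hσ, rfl⟩ := hcase
    exact heven σ hσ
  · rw [phi_nonbij t e hcase, he]
    exact hnb s hcase

instance finFunNonempty : Nonempty (Fin n → Fin n) := ⟨id⟩

lemma endo_bij_id (γ : (Fin n → Fin n) → (Fin n → Fin n)) (hγ : IsEndo γ)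
    (hb : Function.Surjective γ) : γ id = id := by
  obtain ⟨y, hy⟩ := hb id
  have h1 : γ id ∘ γ y = γ y := by
    rw [← hγ]
    rfl
  rw [hy] at h1
  calc γ id = γ id ∘ id := rfl
    _ = id := h1

lemma endo_bij_pres (hn : 5 ≤ n) (γ : (Fin n → Fin n) → (Fin n → Fin n)) (hγ : IsEndo γ)
    (hb : Function.Surjective γ) :
    ∀ s, Function.Bijective s → Function.Bijective (γ s) := by
  haveI : Nonempty (Fin n) := ⟨⟨0, by omega⟩⟩
  intro s hs
  have hid := endo_bij_id γ hγ hb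
  have h1 : s ∘ Function.invFun s = id := funext (Function.rightInverse_invFun hs.2)
  have h2 : Function.invFun s ∘ s = id := funext (Function.leftInverse_invFun hs.1)
  apply Function.bijective_iff_has_inverse.mpr
  refine ⟨γ (Function.invFun s), ?_, ?_⟩
  · intro w
    have h3 : γ (Function.invFun s) ∘ γ s = id := by rw [← hγ, h2, hid]
    exact congrFun h3 w
  · intro w
    have h3 : γ s ∘ γ (Function.invFun s) = id := by rw [← hγ, h1, hid]
    exact congrFun h3 w

lemma endo_inv (hn : 5 ≤ n) (γ : (Fin n → Fin n) → (Fin n → Fin n)) (hγ : IsEndo γ)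
    (hb : Function.Bijective γ) :
    IsEndo (Function.invFun γ) ∧ Function.Bijective (Function.invFun γ) ∧
      ∀ s, Function.invFun γ (γ s) = s := by
  have hli := Function.leftInverse_invFun hb.1
  have hri := Function.rightInverse_invFun hb.2
  refine ⟨?_, ?_, fun s => hli s⟩
  · intro u v
    obtain ⟨a, rfl⟩ := hb.2 u
    obtain ⟨c, rfl⟩ := hb.2 v
    rw [← hγ, hli, hli, hli]
  · exact Function.bijective_iff_has_inverse.mpr ⟨γ, hri, hli⟩

lemma endo_bij_nonbij (hn : 5 ≤ n) (γ : (Fin n → Fin n) → (Fin n → Fin n)) (hγ : IsEndo γ)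
    (hb : Function.Bijective γ) :
    ∀ s, ¬ Function.Bijective s → ¬ Function.Bijective (γ s) := by
  obtain ⟨hγ', hb', hls⟩ := endo_inv hn γ hγ hb
  intro s hs hbs
  have h1 := endo_bij_pres hn (Function.invFun γ) hγ' hb'.2 (γ s) hbs
  rw [hls s] at h1
  exact hs h1

lemma endo_bij_parity (hn : 5 ≤ n) (γ : (Fin n → Fin n) → (Fin n → Fin n)) (hγ : IsEndo γ)
    (hb : Function.Bijective γ) :
    (∀ s, IsOddPerm s → IsOddPerm (γ s)) ∧ (∀ s, IsEvenPerm s → IsEvenPerm (γ s)) := by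
  haveI : Nonempty (Fin n) := ⟨⟨0, by omega⟩⟩
  have hΓb : ∀ σ : Equiv.Perm (Fin n), Function.Bijective (γ ⇑σ) :=
    fun σ => endo_bij_pres hn γ hγ hb.2 ⇑σ σ.bijective
  set Γ : Equiv.Perm (Fin n) →* Equiv.Perm (Fin n) :=
    MonoidHom.mk' (fun σ => Equiv.ofBijective (γ ⇑σ) (hΓb σ)) (by
      intro σ τ
      apply Equiv.coe_fn_injective
      show γ ⇑(σ * τ) = γ ⇑σ ∘ γ ⇑τ
      have hc : (⇑(σ * τ) : Fin n → Fin n) = ⇑σ ∘ ⇑τ := rfl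
      rw [hc, hγ]) with hΓ
  have hΓcoe : ∀ σ, ⇑(Γ σ) = γ ⇑σ := fun σ => rfl
  have hsign : ∀ σ, Equiv.Perm.sign (Γ σ) = Equiv.Perm.sign σ := by
    by_cases hχ : ∀ σ, Equiv.Perm.sign (Γ σ) = 1
    · exfalso
      haveI : Nontrivial (Fin n) := ⟨⟨⟨0, by omega⟩, ⟨1, by omega⟩, by simp [Fin.ext_iff]⟩⟩
      set Γ' : Equiv.Perm (Fin n) → alternatingGroup (Fin n) :=
        fun σ => ⟨Γ σ, Equiv.Perm.mem_alternatingGroup.mpr (hχ σ)⟩ with hΓ'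
      have hinj : Function.Injective Γ' := by
        intro σ τ h
        have h2 : Γ σ = Γ τ := Subtype.ext_iff.mp h
        have h3 : γ ⇑σ = γ ⇑τ := by
          rw [← hΓcoe σ, ← hΓcoe τ, h2]
        exact Equiv.coe_fn_injective (hb.1 h3)
      have hcard := Fintype.card_le_of_injective Γ' hinj
      have h2 := two_mul_card_alternatingGroup (α := Fin n)
      have h3 : 0 < Fintype.card (alternatingGroup (Fin n)) := Fintype.card_pos
      omega
    · push_neg at hχ
      obtain ⟨σ0, hσ0⟩ := hχ
      have hχσ0 : Equiv.Perm.sign (Γ σ0) = -1 := by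
        rcases Int.units_eq_one_or (Equiv.Perm.sign (Γ σ0)) with h | h
        · exact absurd h hσ0
        · exact h
      set χ : Equiv.Perm (Fin n) →* ℤˣ := (Equiv.Perm.sign).comp Γ with hχdef
      have hχapp : ∀ σ, χ σ = Equiv.Perm.sign (Γ σ) := fun σ => rfl
      have hker : alternatingGroup (Fin n) ≤ χ.ker := by
        apply alternating_le_of_ne_bot hn χ.ker χ.normal_ker
        intro hbot
        have hinjχ : Function.Injective χ := (MonoidHom.ker_eq_bot_iff χ).mp hbot
        have hcard := Fintype.card_le_of_injective χ hinjχ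
        rw [Fintype.card_perm, Fintype.card_fin] at hcard
        have h5 : Fintype.card ℤˣ = 2 := Fintype.card_units_int
        have h6 : 120 ≤ Nat.factorial n := by
          calc 120 = Nat.factorial 5 := rfl
            _ ≤ Nat.factorial n := Nat.factorial_le hn
        omega
      have hsignσ0 : Equiv.Perm.sign σ0 = -1 := by
        rcases Int.units_eq_one_or (Equiv.Perm.sign σ0) with h | h
        · exfalso
          have h7 : σ0 ∈ χ.ker := hker (Equiv.Perm.mem_alternatingGroup.mpr h)
          rw [MonoidHom.mem_ker, hχapp] at h7
          exact hσ0 h7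
        · exact h
      intro σ
      rcases Int.units_eq_one_or (Equiv.Perm.sign σ) with h | h
      · rw [h]
        have h7 : σ ∈ χ.ker := hker (Equiv.Perm.mem_alternatingGroup.mpr h)
        rw [MonoidHom.mem_ker, hχapp] at h7
        exact h7
      · rw [h]
        have hmul : Equiv.Perm.sign (σ * σ0⁻¹) = 1 := by
          rw [map_mul, map_inv, h, hsignσ0]
          decide
        have h7 : (σ * σ0⁻¹) ∈ χ.ker := hker (Equiv.Perm.mem_alternatingGroup.mpr hmul)
        rw [MonoidHom.mem_ker, map_mul, map_inv, mul_inv_eq_one] at h7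
        calc Equiv.Perm.sign (Γ σ) = χ σ := rfl
          _ = χ σ0 := h7
          _ = -1 := hχσ0
  constructor
  · rintro s ⟨σ, hσ, rfl⟩
    exact ⟨Γ σ, (hsign σ).trans hσ, hΓcoe σ⟩
  · rintro s ⟨σ, hσ, rfl⟩
    exact ⟨Γ σ, (hsign σ).trans hσ, hΓcoe σ⟩

lemma tech {t e T E : Fin n → Fin n} (P1 : Permissible t e) (P2 : Permissible T E)
    (M1 : t = T ∨ t = T ∘ T ∨ t = E) (M3 : T = t ∨ T = t ∘ t ∨ T = e)
    (M2 : e = T ∨ e = T ∘ T ∨ e = E) (M4 : E = t ∨ E = t ∘ t ∨ E = e) :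
    t = T ∧ e = E := by
  obtain ⟨ht3, hte, het, hee⟩ := P1
  obtain ⟨hT3, hTE, hET, hEE⟩ := P2
  have ht3' : ∀ x, t (t (t x)) = t x := fun x => congrFun ht3 x
  have hte' : ∀ x, t (e x) = e x := fun x => congrFun hte x
  have het' : ∀ x, e (t x) = e x := fun x => congrFun het x
  have hee' : ∀ x, e (e x) = e x := fun x => congrFun hee x
  have hT3' : ∀ x, T (T (T x)) = T x := fun x => congrFun hT3 x
  have hTE' : ∀ x, T (E x) = E x := fun x => congrFun hTE x
  have hET' : ∀ x, E (T x) = E x := fun x => congrFun hET x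
  have hEE' : ∀ x, E (E x) = E x := fun x => congrFun hEE x
  have hteq : t = T := by
    rcases M1 with h1 | h1 | h1
    · exact h1
    · rcases M3 with h2 | h2 | h2
      · exact h2.symm
      · -- t = T∘T, T = t∘t
        funext x
        have e1 : t x = T (T x) := congrFun h1 x
        have e2 : ∀ y, T y = t (t y) := fun y => congrFun h2 y
        rw [e2, e2] at e1
        -- e1 : t x = t (t (t (t x)))
        rw [ht3' (t x)] at e1
        rw [e2 x, ← e1]
      · -- t = T∘T, T = e
        funext x
        have e1 : t x = T (T x) := congrFun h1 x
        have e2 : ∀ y, T y = e y := fun y => congrFun h2 y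
        rw [e2, e2, hee'] at e1
        rw [e2 x, ← e1]
    · rcases M3 with h2 | h2 | h2
      · exact h2.symm
      · -- t = E, T = t∘t
        funext x
        have e1 : ∀ y, t y = E y := fun y => congrFun h1 y
        have e2 : T x = t (t x) := congrFun h2 x
        rw [e1, e1, hEE'] at e2
        rw [e1 x, ← e2]
      · -- t = E, T = e
        funext x
        have e1 : ∀ y, t y = E y := fun y => congrFun h1 y
        have e2 : ∀ y, T y = e y := fun y => congrFun h2 y
        -- hTE' x : T (E x) = E x, i.e. e (t x) = t x; het' x : e (t x) = e x
        have e3 : T (E x) = E x := hTE' x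
        rw [e2, ← e1 x, het' x, e1 x] at e3
        -- e3 : e x = E x, and t x = E x, T x = e x
        rw [e1 x, ← e3, e2 x]
  subst hteq
  refine ⟨rfl, ?_⟩
  rcases M2 with h1 | h1 | h1
  · rcases M4 with h2 | h2 | h2
    · rw [h1, h2]
    · funext x
      have e4 : t (e x) = e x := hte' x
      rw [h1] at e4
      rw [h1, congrFun h2 x]
      exact e4.symm
    · exact h2.symm
  · rcases M4 with h2 | h2 | h2
    · funext x
      have e4 : t (E x) = E x := hTE' x
      rw [congrFun h2 x] at e4
      rw [congrFun h1 x, congrFun h2 x]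
      exact e4
    · rw [h1, h2]
    · exact h2.symm
  · exact h1


/-- For `n ≥ 5`, semigroup endomorphisms `α`, `β` of `T_n` are Green's
L-related iff `α = β` or both are bijective. -/
theorem green_L (n : ℕ) (hn : 5 ≤ n) (α β : (Fin n → Fin n) → (Fin n → Fin n))
    (hα : IsEndo α) (hβ : IsEndo β) :
    (∃ γ δ, IsEndo γ ∧ IsEndo δ ∧
        α = (fun x => β (γ x)) ∧ β = (fun x => α (δ x))) ↔
      (α = β ∨ (Function.Bijective α ∧ Function.Bijective β)) := by
  constructor
  · rintro ⟨γ, δ, hγ, hδ, h1, h2⟩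
    by_cases hai : Function.Injective α
    · right
      have hδγ : ∀ x, δ (γ x) = x := by
        intro x
        apply hai
        have e1 : α x = β (γ x) := congrFun h1 x
        have e2 : β (γ x) = α (δ (γ x)) := congrFun h2 (γ x)
        exact (e1.trans e2).symm
      have hδb : Function.Bijective δ :=
        Finite.surjective_iff_bijective.mp (fun x => ⟨γ x, hδγ x⟩)
      have hbi : Function.Injective β := by
        intro x y hxy
        have e1 : α (δ x) = α (δ y) := by
          rw [← congrFun h2 x, ← congrFun h2 y, hxy]
        exact hδb.1 (hai e1)
      exact ⟨Finite.injective_iff_bijective.mp hai, Finite.injective_iff_bijective.mp hbi⟩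
    · left
      have hbi : ¬ Function.Injective β := by
        intro hbinj
        have hγδ : ∀ x, γ (δ x) = x := by
          intro x
          apply hbinj
          have e1 : β x = α (δ x) := congrFun h2 x
          have e2 : α (δ x) = β (γ (δ x)) := congrFun h1 (δ x)
          exact (e1.trans e2).symm
        have hγb : Function.Bijective γ :=
          Finite.surjective_iff_bijective.mp (fun x => ⟨δ x, hγδ x⟩)
        apply hai
        intro x y hxy
        have e1 : β (γ x) = β (γ y) := by
          rw [← congrFun h1 x, ← congrFun h1 y, hxy]
        exact hγb.1 (hbinj e1)
      obtain ⟨t, e, Pa, hA⟩ := endo_classify hn α hα hai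
      obtain ⟨T, E, Pb, hB⟩ := endo_classify hn β hβ hbi
      by_cases hγi : Function.Injective γ
      · have hγb : Function.Bijective γ := Finite.injective_iff_bijective.mp hγi
        obtain ⟨hodd, heven⟩ := endo_bij_parity hn γ hγ hγb
        have hnb := endo_bij_nonbij hn γ hγ hγb
        funext s
        have e1 : α s = β (γ s) := congrFun h1 s
        rw [e1, hB]
        rcases trichotomy s with hc | hc | hc
        · rw [phi_odd T E (hodd s hc), phi_odd T E hc]
        · rw [phi_even T E (heven s hc), phi_even T E hc]
        · rw [phi_nonbij T E (hnb s hc), phi_nonbij T E hc]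
      · by_cases hδi : Function.Injective δ
        · have hδb : Function.Bijective δ := Finite.injective_iff_bijective.mp hδi
          obtain ⟨hodd, heven⟩ := endo_bij_parity hn δ hδ hδb
          have hnb := endo_bij_nonbij hn δ hδ hδb
          funext s
          have e1 : β s = α (δ s) := congrFun h2 s
          rw [e1, hA]
          rcases trichotomy s with hc | hc | hc
          · rw [phi_odd t e (hodd s hc), phi_odd t e hc]
          · rw [phi_even t e (heven s hc), phi_even t e hc]
          · rw [phi_nonbij t e (hnb s hc), phi_nonbij t e hc]
        · obtain ⟨u, f, Pg, hG⟩ := endo_classify hn γ hγ hγi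
          obtain ⟨v, g, Pd, hD⟩ := endo_classify hn δ hδ hδi
          have h01 : (⟨0, by omega⟩ : Fin n) ≠ (⟨1, by omega⟩ : Fin n) := by
            simp [Fin.ext_iff]
          set sw : Fin n → Fin n :=
            ⇑(Equiv.swap (⟨0, by omega⟩ : Fin n) (⟨1, by omega⟩ : Fin n)) with hsw
          have hswodd : IsOddPerm sw := ⟨_, Equiv.Perm.sign_swap h01, rfl⟩
          have hconb : ¬ Function.Bijective (fun _ : Fin n => (⟨0, by omega⟩ : Fin n)) := by
            intro h
            exact h01 (h.1 rfl)
          have M1 : t = T ∨ t = T ∘ T ∨ t = E := by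
            have e1 : α sw = β (γ sw) := congrFun h1 sw
            rw [hA, phi_odd t e hswodd, hG, phi_odd u f hswodd, hB] at e1
            rw [e1]
            exact phi_mem T E u
          have M2 : e = T ∨ e = T ∘ T ∨ e = E := by
            have e1 : α (fun _ : Fin n => (⟨0, by omega⟩ : Fin n)) =
                β (γ (fun _ : Fin n => (⟨0, by omega⟩ : Fin n))) := congrFun h1 _
            rw [hA, phi_nonbij t e hconb, hG, phi_nonbij u f hconb, hB] at e1
            rw [e1]
            exact phi_mem T E f
          have M3 : T = t ∨ T = t ∘ t ∨ T = e := by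
            have e1 : β sw = α (δ sw) := congrFun h2 sw
            rw [hB, phi_odd T E hswodd, hD, phi_odd v g hswodd, hA] at e1
            rw [e1]
            exact phi_mem t e v
          have M4 : E = t ∨ E = t ∘ t ∨ E = e := by
            have e1 : β (fun _ : Fin n => (⟨0, by omega⟩ : Fin n)) =
                α (δ (fun _ : Fin n => (⟨0, by omega⟩ : Fin n))) := congrFun h2 _
            rw [hB, phi_nonbij T E hconb, hD, phi_nonbij v g hconb, hA] at e1
            rw [e1]
            exact phi_mem t e g
          obtain ⟨hteq, heeq⟩ := tech Pa Pb M1 M3 M2 M4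
          rw [hA, hB, hteq, heeq]
  · rintro (rfl | ⟨hba, hbb⟩)
    · exact ⟨id, id, fun s s' => rfl, fun s s' => rfl, rfl, rfl⟩
    · have hinvβ : ∀ u v : Fin n → Fin n,
          Function.invFun β (u ∘ v) = Function.invFun β u ∘ Function.invFun β v := by
        intro u v
        obtain ⟨a, rfl⟩ := hbb.2 u
        obtain ⟨c, rfl⟩ := hbb.2 v
        rw [← hβ, Function.leftInverse_invFun hbb.1, Function.leftInverse_invFun hbb.1,
          Function.leftInverse_invFun hbb.1]
      have hinvα : ∀ u v : Fin n → Fin n,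
          Function.invFun α (u ∘ v) = Function.invFun α u ∘ Function.invFun α v := by
        intro u v
        obtain ⟨a, rfl⟩ := hba.2 u
        obtain ⟨c, rfl⟩ := hba.2 v
        rw [← hα, Function.leftInverse_invFun hba.1, Function.leftInverse_invFun hba.1,
          Function.leftInverse_invFun hba.1]
      refine ⟨fun x => Function.invFun β (α x), fun x => Function.invFun α (β x), ?_, ?_, ?_, ?_⟩
      · intro s s'
        show Function.invFun β (α (s ∘ s')) = _
        rw [hα, hinvβ]
      · intro s s'
        show Function.invFun α (β (s ∘ s')) = _
        rw [hβ, hinvα]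
      · funext x
        show α x = β (Function.invFun β (α x))
        exact (Function.rightInverse_invFun hbb.2 (α x)).symm
      · funext x
        show β x = α (Function.invFun α (β x))
        exact (Function.rightInverse_invFun hba.2 (β x)).symm
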